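/- Let X be a continuum (a compact connected metric space with more than one point), let n ≥ 2 be an integer, and let f : X → X be a continuous map. Then f is cofinitely sensitive if and only if F_n(f) is cofinitely sensitive; moreover, if SF_n(f) is cofinitely sensitive, then F_n(f) is cofinitely sensitive. -/

import Mathlib

open Metric Set TopologicalSpace

variable (X : Type*) [MetricSpace X] (n : ℕ)

/-- The `n`-fold symmetric product `F_n(X)`: nonempty subsets of `X` with at most `n`
points, as a subspace of the nonempty compact subsets of `X` with the Hausdorff metric. -/
abbrev Fn := {A : NonemptyCompacts X // (A : Set X).Finite ∧ (A : Set X).ncard ≤ n}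

/-- The induced map `F_n(f)` on the `n`-fold symmetric product, `A ↦ f(A)`. -/
noncomputable def FnMap (f : X → X) : Fn X n → Fn X n := fun A =>
  ⟨⟨⟨f '' (A.1 : Set X), (A.2.1.image f).isCompact⟩, A.1.nonempty.image f⟩,
    A.2.1.image f, le_trans (Set.ncard_image_le A.2.1) A.2.2⟩

/-- `F_1(X) ⊆ F_n(X)`: the set of singletons. -/
def F1 : Set (Fn X n) := {A | ∃ x : X, (A.1 : Set X) = {x}}

/-- The setoid collapsing `F_1(X)` to a point. -/
def SFnSetoid : Setoid (Fn X n) where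
  r A B := A = B ∨ (A ∈ F1 X n ∧ B ∈ F1 X n)
  iseqv := by
    refine ⟨fun _ => Or.inl rfl, fun h => h.imp Eq.symm And.symm, fun h₁ h₂ => ?_⟩
    rcases h₁ with rfl | h₁
    · exact h₂
    · rcases h₂ with rfl | h₂
      · exact Or.inr h₁
      · exact Or.inr ⟨h₁.1, h₂.2⟩

/-- The `n`-fold symmetric product suspension `SF_n(X) = F_n(X)/F_1(X)`,
with the quotient topology. -/
abbrev SFn := Quotient (SFnSetoid X n)

/-- The quotient map `q : F_n(X) → SF_n(X)`. -/
def SFnQ : Fn X n → SFn X n := Quotient.mk (SFnSetoid X n)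

/-- The induced map `SF_n(f)` on the suspension, with `SF_n(f) ∘ q = q ∘ F_n(f)`. -/
noncomputable def SFnMap (f : X → X) : SFn X n → SFn X n :=
  Quotient.lift (fun A => SFnQ X n (FnMap X n f A))
    (fun A B h => Quotient.sound (by
      rcases h with rfl | ⟨⟨x, hx⟩, ⟨y, hy⟩⟩
      · exact Or.inl rfl
      · exact Or.inr ⟨⟨f x, by simp [FnMap, hx]⟩, ⟨f y, by simp [FnMap, hy]⟩⟩))

/-- The metric `ρ` on `SF_n(X)`:
`ρ(χ₁,χ₂) = H(F_1(X) ∪ q⁻¹(χ₁), F_1(X) ∪ q⁻¹(χ₂))` where `H` is the Hausdorff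
distance between subsets of `F_n(X)`. -/
noncomputable def SFnDist : SFn X n → SFn X n → ℝ := fun a b =>
  Metric.hausdorffDist (F1 X n ∪ SFnQ X n ⁻¹' {a}) (F1 X n ∪ SFnQ X n ⁻¹' {b})

/-- `g` is cofinitely sensitive (w.r.t. a distance function `d` and the topology of `Z`). -/
def CofinitelySensitive {Z : Type*} [TopologicalSpace Z] (d : Z → Z → ℝ) (g : Z → Z) : Prop :=
  ∃ δ : ℝ, 0 < δ ∧ ∃ N : ℕ, ∀ U : Set Z, IsOpen U → U.Nonempty → ∀ k : ℕ, N < k →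
    ∃ x ∈ U, ∃ y ∈ U, δ < d (g^[k] x) (g^[k] y)


section Aux

variable {X : Type*} [MetricSpace X] {n : ℕ}

lemma Fn.dist_eq' (A B : Fn X n) :
    dist A B = hausdorffDist (A.1 : Set X) (B.1 : Set X) := rfl

/-- Build an element of `Fn X n` from a suitable set. -/
def FnOf (s : Set X) (h1 : s.Finite) (h2 : s.Nonempty) (h3 : s.ncard ≤ n) : Fn X n :=
  ⟨⟨⟨s, h1.isCompact⟩, h2⟩, h1, h3⟩

@[simp] lemma FnOf_coe (s : Set X) (h1 h2 h3) : ((FnOf (n := n) s h1 h2 h3).1 : Set X) = s := rfl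

lemma coe_FnMap_iter (f : X → X) (k : ℕ) (A : Fn X n) :
    (((FnMap X n f)^[k] A).1 : Set X) = f^[k] '' (A.1 : Set X) := by
  induction k with
  | zero => simp
  | succ k ih =>
    rw [Function.iterate_succ_apply']
    show f '' (((FnMap X n f)^[k] A).1 : Set X) = _
    rw [ih, Function.iterate_succ']
    exact (Set.image_comp f (f^[k]) _).symm

lemma exists_far_of_hausdorffDist_gt {s t : Set X} (hs : s.Nonempty) (ht : t.Nonempty) {δ : ℝ}
    (hδ : 0 ≤ δ) (h : δ < hausdorffDist s t) :
    ∃ x ∈ s, ∃ y ∈ t, δ < dist x y := by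
  by_contra hc
  push_neg at hc
  refine absurd (hausdorffDist_le_of_mem_dist hδ
    (fun x hx => ⟨ht.some, ht.some_mem, hc x hx _ ht.some_mem⟩)
    (fun y hy => ⟨hs.some, hs.some_mem, by rw [dist_comm]; exact hc _ hs.some_mem y hy⟩))
    (not_le.2 h)

lemma isOpen_fnSub {U : Set X} (hU : IsOpen U) : IsOpen {A : Fn X n | (A.1 : Set X) ⊆ U} := by
  rw [Metric.isOpen_iff]
  intro A hA
  obtain ⟨ε, hε, hsub⟩ := A.1.isCompact.exists_thickening_subset_open hU hA
  refine ⟨ε, hε, fun B hB => ?_⟩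
  intro x hx
  apply hsub
  rw [Metric.mem_thickening_iff]
  have h1 : infDist x (A.1 : Set X) ≤ hausdorffDist (B.1 : Set X) (A.1 : Set X) :=
    infDist_le_hausdorffDist_of_mem hx (hausdorffEdist_ne_top_of_nonempty_of_bounded
      B.1.nonempty A.1.nonempty B.1.isCompact.isBounded A.1.isCompact.isBounded)
  have h2 : infDist x (A.1 : Set X) < ε := lt_of_le_of_lt h1 (by
    rw [← Fn.dist_eq']
    exact mem_ball.1 hB)
  exact (infDist_lt_iff A.1.nonempty).1 h2

/-- `f` cofinitely sensitive implies `F_n(f)` cofinitely sensitive. -/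
lemma part1_fwd (n : ℕ) (f : X → X)
    (h : CofinitelySensitive (dist : X → X → ℝ) f) :
    CofinitelySensitive dist (FnMap X n f) := by
  obtain ⟨δ, hδ, N, hsens⟩ := h
  refine ⟨δ/3, by positivity, N, ?_⟩
  intro U hU hUne k hk
  obtain ⟨A, hA⟩ := hUne
  obtain ⟨ε, hε, hball⟩ := Metric.isOpen_iff.1 hU A hA
  have hfin : ((A.1 : Set X)).Finite := A.2.1
  obtain ⟨a₀, ha₀⟩ := A.1.nonempty
  have H : ∀ a : X, ∃ u, dist u a < ε/2 ∧ ∃ w, dist w a < ε/2 ∧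
      δ < dist (f^[k] u) (f^[k] w) := by
    intro a
    obtain ⟨u, hu, w, hw, hd⟩ := hsens (ball a (ε/2)) isOpen_ball
      ⟨a, mem_ball_self (by positivity)⟩ k hk
    exact ⟨u, mem_ball.1 hu, w, mem_ball.1 hw, hd⟩
  choose u hu w hw hd using H
  set P := f^[k] (u a₀) with hP
  set r : X → X := fun a => if δ/2 ≤ dist P (f^[k] (u a)) then u a else w a with hr
  have hrball : ∀ a, dist (r a) a < ε/2 := by
    intro a
    by_cases hc : δ/2 ≤ dist P (f^[k] (u a))
    · simp only [hr]; rw [if_pos hc]; exact hu a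
    · simp only [hr]; rw [if_neg hc]; exact hw a
  have hrfar : ∀ a, δ/2 ≤ dist P (f^[k] (r a)) := by
    intro a
    by_cases hc : δ/2 ≤ dist P (f^[k] (u a))
    · simp only [hr]; rw [if_pos hc]; exact hc
    · push_neg at hc
      have h1 := hd a
      have htri : dist (f^[k] (u a)) (f^[k] (w a)) ≤
          dist P (f^[k] (u a)) + dist P (f^[k] (w a)) := dist_triangle_left _ _ _
      simp only [hr]; rw [if_neg (not_le.2 hc)]
      linarith
  have hcard1 : 1 ≤ ((A.1 : Set X)).ncard := (Set.ncard_pos hfin).2 ⟨a₀, ha₀⟩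
  have hcard : ∀ z : X, (insert z (r '' ((A.1 : Set X) \ {a₀}))).ncard ≤ n := by
    intro z
    calc (insert z (r '' ((A.1 : Set X) \ {a₀}))).ncard
        ≤ (r '' ((A.1 : Set X) \ {a₀})).ncard + 1 := Set.ncard_insert_le _ _
      _ ≤ ((A.1 : Set X) \ {a₀}).ncard + 1 :=
          Nat.add_le_add_right (Set.ncard_image_le (hfin.diff)) 1
      _ = (((A.1 : Set X)).ncard - 1) + 1 := by
          rw [Set.ncard_diff_singleton_of_mem ha₀]
      _ = ((A.1 : Set X)).ncard := Nat.succ_pred_eq_of_pos hcard1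
      _ ≤ n := A.2.2
  have hmem : ∀ (z : X), dist z a₀ < ε/2 →
      (FnOf (insert z (r '' ((A.1 : Set X) \ {a₀}))) (((hfin.diff).image r).insert _)
        (insert_nonempty _ _) (hcard z)) ∈ U := by
    intro z hz
    apply hball
    rw [mem_ball, Fn.dist_eq', FnOf_coe]
    have hle : hausdorffDist (insert z (r '' ((A.1 : Set X) \ {a₀}))) (A.1 : Set X) ≤ ε/2 := by
      apply hausdorffDist_le_of_mem_dist (by positivity)
      · intro x hx
        rcases mem_insert_iff.1 hx with rfl | ⟨a, ha, rfl⟩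
        · exact ⟨a₀, ha₀, le_of_lt hz⟩
        · exact ⟨a, ha.1, le_of_lt (hrball a)⟩
      · intro y hy
        by_cases hy0 : y = a₀
        · subst hy0
          exact ⟨z, mem_insert _ _, by rw [dist_comm]; exact le_of_lt hz⟩
        · exact ⟨r y, mem_insert_of_mem _ ⟨y, ⟨hy, hy0⟩, rfl⟩,
            by rw [dist_comm]; exact le_of_lt (hrball y)⟩
    calc hausdorffDist (insert z (r '' ((A.1 : Set X) \ {a₀}))) (A.1 : Set X) ≤ ε/2 := hle
      _ < ε := by linarith
  refine ⟨FnOf (insert (u a₀) (r '' ((A.1 : Set X) \ {a₀})))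
      (((hfin.diff).image r).insert _) (insert_nonempty _ _) (hcard _), hmem _ (hu a₀),
    FnOf (insert (w a₀) (r '' ((A.1 : Set X) \ {a₀})))
      (((hfin.diff).image r).insert _) (insert_nonempty _ _) (hcard _), hmem _ (hw a₀), ?_⟩
  rw [Fn.dist_eq', coe_FnMap_iter, coe_FnMap_iter, FnOf_coe, FnOf_coe]
  have hPmem : P ∈ f^[k] '' (insert (u a₀) (r '' ((A.1 : Set X) \ {a₀}))) :=
    ⟨u a₀, mem_insert _ _, rfl⟩
  have hCne : (insert (w a₀) (r '' ((A.1 : Set X) \ {a₀}))).Nonempty := insert_nonempty _ _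
  have hinf : δ/2 ≤ infDist P (f^[k] '' (insert (w a₀) (r '' ((A.1 : Set X) \ {a₀})))) := by
    by_contra hcon
    push_neg at hcon
    obtain ⟨y, hy, hlt⟩ := (infDist_lt_iff (hCne.image _)).1 hcon
    obtain ⟨z, hz, rfl⟩ := hy
    rcases mem_insert_iff.1 hz with rfl | ⟨a, _, rfl⟩
    · have h2 := hd a₀
      rw [← hP] at h2
      linarith
    · exact absurd hlt (not_lt.2 (hrfar a))
  have hfinH : EMetric.hausdorffEdist
      (f^[k] '' (insert (u a₀) (r '' ((A.1 : Set X) \ {a₀}))))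
      (f^[k] '' (insert (w a₀) (r '' ((A.1 : Set X) \ {a₀})))) ≠ ⊤ :=
    hausdorffEdist_ne_top_of_nonempty_of_bounded ((insert_nonempty _ _).image _)
      (hCne.image _) ((((hfin.diff).image r).insert _).image _).isBounded
      ((((hfin.diff).image r).insert _).image _).isBounded
  calc δ/3 < δ/2 := by linarith
    _ ≤ infDist P (f^[k] '' (insert (w a₀) (r '' ((A.1 : Set X) \ {a₀})))) := hinf
    _ ≤ hausdorffDist (f^[k] '' (insert (u a₀) (r '' ((A.1 : Set X) \ {a₀}))))
        (f^[k] '' (insert (w a₀) (r '' ((A.1 : Set X) \ {a₀})))) :=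
        infDist_le_hausdorffDist_of_mem hPmem hfinH

/-- `F_n(f)` cofinitely sensitive implies `f` cofinitely sensitive. -/
lemma part1_bwd (n : ℕ) (hn : 2 ≤ n) (f : X → X)
    (h : CofinitelySensitive dist (FnMap X n f)) :
    CofinitelySensitive (dist : X → X → ℝ) f := by
  obtain ⟨δ, hδ, N, hsens⟩ := h
  refine ⟨δ, hδ, N, ?_⟩
  intro U hU hUne k hk
  obtain ⟨x₀, hx₀⟩ := hUne
  have hone : ({x₀} : Set X).ncard ≤ n := by
    rw [Set.ncard_singleton]; omega
  obtain ⟨A, hA, B, hB, hd⟩ := hsens {A : Fn X n | (A.1 : Set X) ⊆ U} (isOpen_fnSub hU)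
    ⟨FnOf {x₀} (finite_singleton _) (singleton_nonempty _) hone, by
      simpa using hx₀⟩ k hk
  rw [Fn.dist_eq', coe_FnMap_iter, coe_FnMap_iter] at hd
  obtain ⟨x, hx, y, hy, hxy⟩ := exists_far_of_hausdorffDist_gt
    (A.1.nonempty.image _) (B.1.nonempty.image _) (le_of_lt hδ) hd
  obtain ⟨a, ha, rfl⟩ := hx
  obtain ⟨b, hb, rfl⟩ := hy
  exact ⟨a, hA ha, b, hB hb, hxy⟩

lemma SFnMap_iter_q (f : X → X) (k : ℕ) (A : Fn X n) :
    (SFnMap X n f)^[k] (SFnQ X n A) = SFnQ X n ((FnMap X n f)^[k] A) := by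
  induction k with
  | zero => rfl
  | succ k ih => rw [Function.iterate_succ_apply', Function.iterate_succ_apply', ih]; rfl

lemma mem_q_preimage_self (A : Fn X n) : A ∈ SFnQ X n ⁻¹' {SFnQ X n A} := rfl

lemma SFnDist_q_le (A B : Fn X n) : SFnDist X n (SFnQ X n A) (SFnQ X n B) ≤ dist A B := by
  apply hausdorffDist_le_of_mem_dist dist_nonneg
  · rintro x (hx | hx)
    · exact ⟨x, Or.inl hx, by simpa using dist_nonneg⟩
    · rcases Quotient.exact hx with h | ⟨hx1, _⟩
      · exact ⟨B, Or.inr (mem_q_preimage_self B), le_of_eq (by rw [h])⟩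
      · exact ⟨x, Or.inl hx1, by simpa using dist_nonneg⟩
  · rintro x (hx | hx)
    · exact ⟨x, Or.inl hx, by simpa using dist_nonneg⟩
    · rcases Quotient.exact hx with h | ⟨hx1, _⟩
      · exact ⟨A, Or.inr (mem_q_preimage_self A), le_of_eq (by rw [h, dist_comm])⟩
      · exact ⟨x, Or.inl hx1, by simpa using dist_nonneg⟩

lemma isClosed_F1 : IsClosed (F1 X n) := by
  rw [← isOpen_compl_iff, Metric.isOpen_iff]
  intro A hA
  have hne := A.1.nonempty
  obtain ⟨x, hx⟩ := hne
  have h2 : ∃ y ∈ (A.1 : Set X), y ≠ x := by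
    by_contra hcon
    push_neg at hcon
    exact hA ⟨x, Set.eq_singleton_iff_unique_mem.2 ⟨hx, hcon⟩⟩
  obtain ⟨y, hy, hyx⟩ := h2
  have hdxy : 0 < dist x y := dist_pos.2 hyx.symm
  refine ⟨dist x y / 3, by linarith, fun B hB => ?_⟩
  rw [mem_ball, Fn.dist_eq'] at hB
  have hfin : EMetric.hausdorffEdist (B.1 : Set X) (A.1 : Set X) ≠ ⊤ :=
    hausdorffEdist_ne_top_of_nonempty_of_bounded B.1.nonempty A.1.nonempty
      B.1.isCompact.isBounded A.1.isCompact.isBounded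
  rw [hausdorffDist_comm] at hB
  obtain ⟨bx, hbx, hbxd⟩ := exists_dist_lt_of_hausdorffDist_lt hx hB
    (by rw [EMetric.hausdorffEdist_comm]; exact hfin)
  obtain ⟨by', hby, hbyd⟩ := exists_dist_lt_of_hausdorffDist_lt hy hB
    (by rw [EMetric.hausdorffEdist_comm]; exact hfin)
  rintro ⟨z, hz⟩
  have hbxz : bx = z := by
    have : bx ∈ ({z} : Set X) := hz ▸ hbx
    simpa using this
  have hbyz : by' = z := by
    have : by' ∈ ({z} : Set X) := hz ▸ hby
    simpa using this
  have h4 : dist x y ≤ dist x bx + dist bx by' + dist by' y := dist_triangle4 x bx by' y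
  have hbb : dist bx by' = 0 := by rw [hbxz, hbyz, dist_self]
  have hyb : dist by' y < dist x y / 3 := by rw [dist_comm]; exact hbyd
  linarith

end Aux

theorem stmt1 (X : Type*) [MetricSpace X] [CompactSpace X] [ConnectedSpace X] [Nontrivial X]
    (n : ℕ) (hn : 2 ≤ n) (f : X → X) (hf : Continuous f) :
    (CofinitelySensitive (dist : X → X → ℝ) f ↔ CofinitelySensitive dist (FnMap X n f)) ∧
    (CofinitelySensitive (SFnDist X n) (SFnMap X n f) →
      CofinitelySensitive dist (FnMap X n f)) := by
  refine ⟨⟨part1_fwd n f, part1_bwd n hn f⟩, ?_⟩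
  rintro ⟨δ, hδ, N, hsens⟩
  refine ⟨δ, hδ, N, ?_⟩
  intro U hU hUne k hk
  have hUne' : (U \ F1 X n).Nonempty := by
    obtain ⟨A, hA⟩ := hUne
    by_cases hA1 : A ∈ F1 X n
    · obtain ⟨x, hx⟩ := hA1
      obtain ⟨ε, hε, hball⟩ := Metric.isOpen_iff.1 hU A hA
      have hy : ∃ y, y ≠ x ∧ dist y x < ε := by
        by_contra hcon
        push_neg at hcon
        have hopen : IsOpen ({x} : Set X) := by
          rw [Metric.isOpen_iff]
          rintro z rfl
          refine ⟨ε, hε, fun y hyb => ?_⟩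
          by_contra hyx
          exact absurd (mem_ball.1 hyb) (not_lt.2 (hcon y (by simpa using hyx)))
        rcases isClopen_iff.1 ⟨isClosed_singleton, hopen⟩ with h | h
        · exact (singleton_nonempty x).ne_empty h
        · obtain ⟨z, w, hzw⟩ := exists_pair_ne X
          have hz : z ∈ ({x} : Set X) := h ▸ mem_univ z
          have hw : w ∈ ({x} : Set X) := h ▸ mem_univ w
          simp only [mem_singleton_iff] at hz hw
          exact hzw (hz.trans hw.symm)
      obtain ⟨y, hyx, hyd⟩ := hy
      have hpaircard : ({x, y} : Set X).ncard ≤ n := by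
        rw [Set.ncard_pair (Ne.symm hyx)]; omega
      refine ⟨FnOf {x, y} (toFinite _) (insert_nonempty x {y}) hpaircard, hball ?_, ?_⟩
      · rw [mem_ball, Fn.dist_eq', FnOf_coe, hx]
        calc hausdorffDist ({x, y} : Set X) ({x} : Set X) ≤ dist y x := by
              apply hausdorffDist_le_of_mem_dist dist_nonneg
              · rintro z (rfl | rfl)
                · exact ⟨z, rfl, by simpa using dist_nonneg⟩
                · exact ⟨x, rfl, le_refl _⟩
              · rintro z rfl
                exact ⟨z, Or.inl rfl, by simpa using dist_nonneg⟩
          _ < ε := hyd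
      · rintro ⟨z, hz⟩
        rw [FnOf_coe] at hz
        have hxz : x = z := by
          have : x ∈ ({z} : Set X) := hz ▸ (by simp : x ∈ ({x, y} : Set X))
          simpa using this
        have hyz : y = z := by
          have : y ∈ ({z} : Set X) := hz ▸ (by simp : y ∈ ({x, y} : Set X))
          simpa using this
        exact hyx (hyz.trans hxz.symm)
    · exact ⟨A, hA, hA1⟩
  have hpre : SFnQ X n ⁻¹' (SFnQ X n '' (U \ F1 X n)) = U \ F1 X n := by
    ext B
    constructor
    · rintro ⟨A', hA', hq⟩
      rcases Quotient.exact hq with rfl | ⟨hA'1, _⟩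
      · exact hA'
      · exact absurd hA'1 hA'.2
    · intro hB
      exact ⟨B, hB, rfl⟩
  have hopen : IsOpen (SFnQ X n '' (U \ F1 X n)) := by
    apply isOpen_coinduced.2
    show IsOpen (SFnQ X n ⁻¹' (SFnQ X n '' (U \ F1 X n)))
    rw [hpre]
    exact hU.sdiff isClosed_F1
  obtain ⟨χ₁, hχ₁, χ₂, hχ₂, hd⟩ := hsens _ hopen (hUne'.image _) k hk
  obtain ⟨A₁, hA₁, rfl⟩ := hχ₁
  obtain ⟨A₂, hA₂, rfl⟩ := hχ₂
  rw [SFnMap_iter_q, SFnMap_iter_q] at hd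
  exact ⟨A₁, hA₁.1, A₂, hA₂.1, lt_of_lt_of_le hd (SFnDist_q_le _ _)⟩
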